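/- arXiv:1809.01426 — 4 statements merged into one kernel-verified Lean document; each statement's English description precedes it below -/
import Mathlib

section
/- Let i = 2j+1 be an odd integer with j ≥ 1, and let w be an infinite word. Suppose there exist factors u, v of w and a nonempty word t such that uv = t³ and u = t^e with rational e ≥ 5/3. Then (uv)^j · u is a product of i factors of w and equals t^x with x = 3j + e ≥ 3i/2 + 1/6. -/
open scoped ENNReal

section Defs
variable {α : Type*}

/-- `u` occurs in the infinite word `w` at position `m`. -/
def FactorAt (u : List α) (w : ℕ → α) (m : ℕ) : Prop :=
  u = (List.range u.length).map (fun n => w (m + n))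

/-- `u` is a factor of the infinite word `w`. -/
def IsFactorI (u : List α) (w : ℕ → α) : Prop := ∃ m, FactorAt u w m

/-- `v` is a product (concatenation) of `i` factors of the infinite word `w`. -/
def IsProd (i : ℕ) (v : List α) (w : ℕ → α) : Prop :=
  ∃ us : Fin i → List α, (∀ j, IsFactorI (us j) w) ∧ v = (List.ofFn us).flatten

/-- `v` is a product of `i` factors of the finite word `w`. -/
def IsProdF (i : ℕ) (v w : List α) : Prop :=
  ∃ us : Fin i → List α, (∀ j, us j <:+: w) ∧ v = (List.ofFn us).flatten

/-- `p` is a period of the finite word `v`. -/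
def HasPeriod (v : List α) (p : ℕ) : Prop :=
  1 ≤ p ∧ p ≤ v.length ∧ ∀ n, n + p < v.length → v[n]? = v[n + p]?

/-- `pexp i w` : supremum of exponents of products of `i` factors of `w`. -/
noncomputable def pexp (i : ℕ) (w : ℕ → α) : ℝ≥0∞ :=
  sSup {x | ∃ v p, IsProd i v w ∧ HasPeriod v p ∧ x = (v.length : ℝ≥0∞) / (p : ℝ≥0∞)}

/-- `cexp w` : supremum of exponents of circular shifts `s ++ p` of factors `p ++ x ++ s`. -/
noncomputable def cexp (w : ℕ → α) : ℝ≥0∞ :=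
  sSup {x | ∃ p xx s q, IsFactorI (p ++ xx ++ s) w ∧ HasPeriod (s ++ p) q ∧
    x = ((s ++ p).length : ℝ≥0∞) / (q : ℝ≥0∞)}

/-- The generalized repetition threshold. -/
noncomputable def RT (i k : ℕ) : ℝ≥0∞ := ⨅ w : ℕ → Fin k, pexp i w

/-- The infinite periodic word `t t t ⋯`. -/
def tomega [Inhabited α] (t : List α) : ℕ → α := fun n => t.getD (n % t.length) default

/-- The prefix of length `L` of the infinite word `w`. -/
def prefixOf (w : ℕ → α) (L : ℕ) : List α := (List.range L).map w

lemma isProd_append {a b : ℕ} {x y : List α} {w : ℕ → α}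
    (hx : IsProd a x w) (hy : IsProd b y w) : IsProd (a + b) (x ++ y) w := by
  obtain ⟨us, hus, rfl⟩ := hx
  obtain ⟨vs, hvs, rfl⟩ := hy
  refine ⟨Fin.append us vs, ?_, ?_⟩
  · intro k
    refine Fin.addCases (fun k => ?_) (fun k => ?_) k
    · simpa using hus k
    · simpa using hvs k
  · rw [List.ofFn_add]
    simp

lemma isProd_one {u : List α} {w : ℕ → α} (h : IsFactorI u w) : IsProd 1 u w :=
  ⟨fun _ => u, fun _ => h, by simp⟩

lemma isProd_nil {w : ℕ → α} : IsProd 0 [] w :=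
  ⟨fun k => k.elim0, fun k => k.elim0, by simp⟩

lemma tomega_shift [Inhabited α] (t : List α) (a n : ℕ) :
    tomega t (a * t.length + n) = tomega t n := by
  simp [tomega, Nat.add_comm, Nat.add_mul_mod_self_right]

lemma prefixOf_add (w : ℕ → α) (a b : ℕ) :
    prefixOf w (a + b) = prefixOf w a ++ (List.range b).map (fun n => w (a + n)) := by
  simp [prefixOf, List.range_add, Function.comp]

lemma prefixOf_tomega_add [Inhabited α] (t : List α) (a b : ℕ) :
    prefixOf (tomega t) (a * t.length + b) =
      prefixOf (tomega t) (a * t.length) ++ prefixOf (tomega t) b := by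
  rw [prefixOf_add]
  congr 1
  unfold prefixOf
  congr 1
  funext n
  exact tomega_shift t a n

lemma prefixOf_tomega_len [Inhabited α] (t : List α) : prefixOf (tomega t) t.length = t := by
  apply List.ext_getElem
  · simp [prefixOf]
  · intro n h1 h2
    simp only [prefixOf, List.getElem_map, List.getElem_range, tomega]
    rw [Nat.mod_eq_of_lt (by simpa [prefixOf] using h1)]
    exact List.getD_eq_getElem t default _

lemma prefixOf_tomega_mul [Inhabited α] (t : List α) (k : ℕ) :
    prefixOf (tomega t) (k * t.length) = (List.replicate k t).flatten := by
  induction k with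
  | zero => simp [prefixOf]
  | succ k ih =>
    have : (k + 1) * t.length = k * t.length + t.length := by ring
    rw [this, prefixOf_tomega_add, ih, prefixOf_tomega_len, List.replicate_succ']
    simp


end Defs

theorem stmt2 {α : Type*} [Inhabited α] (w : ℕ → α) (i j : ℕ) (hj : 1 ≤ j)
    (hi : i = 2 * j + 1) (u v t : List α) (ht : t ≠ [])
    (hu : IsFactorI u w) (hv : IsFactorI v w)
    (huv : u ++ v = (List.replicate 3 t).flatten)
    (e : ℚ) (he : 5 / 3 ≤ e) (L : ℕ) (hL : (L : ℚ) = e * t.length)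
    (hue : u = prefixOf (tomega t) L) :
    IsProd i ((List.replicate j (u ++ v)).flatten ++ u) w ∧
    (List.replicate j (u ++ v)).flatten ++ u = prefixOf (tomega t) (3 * j * t.length + L) ∧
    (3 * (j : ℚ) + e ≥ 3 * (i : ℚ) / 2 + 1 / 6) := by
  have key : ∀ k : ℕ, (List.replicate k (u ++ v)).flatten
      = prefixOf (tomega t) (3 * k * t.length) := by
    intro k
    induction k with
    | zero => simp [prefixOf]
    | succ k ih =>
      have h3 : 3 * (k + 1) * t.length = 3 * t.length + 3 * k * t.length := by ring
      rw [List.replicate_succ, List.flatten_cons, ih, h3, prefixOf_tomega_add,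
        show prefixOf (tomega t) (3 * t.length) = u ++ v from by
          rw [prefixOf_tomega_mul, ← huv]]
  have prodkey : ∀ k : ℕ, IsProd (2 * k) ((List.replicate k (u ++ v)).flatten) w := by
    intro k
    induction k with
    | zero => simpa using isProd_nil
    | succ k ih =>
      have h2 : 2 * (k + 1) = 1 + 1 + 2 * k := by ring
      rw [List.replicate_succ, List.flatten_cons, h2]
      exact isProd_append (isProd_append (isProd_one hu) (isProd_one hv)) ih
  refine ⟨?_, ?_, ?_⟩
  · rw [hi]
    exact isProd_append (prodkey j) (isProd_one hu)
  · rw [key j, hue, prefixOf_tomega_add]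
  · subst hi
    push_cast
    linarith
end

section
/- For every k ≥ 2 and i ≥ 1, RT_{i+1}(k) ≥ RT_i(k) + 1, where RT_i(k) is the infimum over all infinite words w on a k-letter alphabet of pexp_i(w), and pexp_i(w) is the supremum of exponents of repetitions occurring as products of i factors of w. -/
open scoped ENNReal

section Aux
variable {α : Type*}

lemma flatten_replicate_singleton (i : ℕ) (a : α) :
    (List.replicate i [a]).flatten = List.replicate i a := by
  induction i with
  | zero => simp
  | succ n ih => simp [List.replicate_succ, ih]

lemma IsFactorI.take {u : List α} {w : ℕ → α} (h : IsFactorI u w) (p : ℕ) :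
    IsFactorI (u.take p) w := by
  obtain ⟨m, hm⟩ := h
  refine ⟨m, ?_⟩
  unfold FactorAt
  rw [List.length_take]
  conv_lhs => rw [hm]
  rw [← List.map_take, List.take_range]

lemma period_insert {A B : List α} {p : ℕ} (hp : HasPeriod (A ++ B) p)
    (hpB : p ≤ B.length) : HasPeriod (A ++ (B.take p ++ B)) p := by
  obtain ⟨h1, h2, h3⟩ := hp
  have ht : (B.take p).length = p := by rw [List.length_take]; omega
  have hlen : (A ++ (B.take p ++ B)).length = (A ++ B).length + p := by
    simp only [List.length_append, ht]; omega
  refine ⟨h1, by omega, ?_⟩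
  have key : ∀ n, (A ++ (B.take p ++ B))[n]? =
      if n < A.length + p then (A ++ B)[n]? else (A ++ B)[n - p]? := by
    intro n
    simp only [List.getElem?_append, List.getElem?_take, ht]
    split_ifs <;> first | rfl | omega | (congr 1; omega)
  intro n hn
  rw [hlen] at hn
  rw [key, key]
  have hv : (A ++ B).length = A.length + B.length := by simp
  by_cases h4 : n < A.length
  · rw [if_pos (by omega), if_pos (by omega)]
    have := h3 n (by omega)
    simpa using this
  · by_cases h5 : n < A.length + p
    · rw [if_pos h5, if_neg (by omega)]
      congr 1; omega
    · rw [if_neg h5, if_neg (by omega)]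
      have h6 := h3 (n - p) (by omega)
      have e : n - p + p = n := by omega
      rw [e] at h6
      rw [h6]; congr 1; omega

lemma isProd_list {i : ℕ} {v : List α} {w : ℕ → α} :
    IsProd i v w ↔
      ∃ L : List (List α), L.length = i ∧ (∀ u ∈ L, IsFactorI u w) ∧ v = L.flatten := by
  constructor
  · rintro ⟨us, h1, h2⟩
    refine ⟨List.ofFn us, by simp, ?_, h2⟩
    intro u hu
    obtain ⟨j, rfl⟩ := List.mem_ofFn.mp hu
    exact h1 j
  · rintro ⟨L, rfl, h2, h3⟩
    refine ⟨fun j => L[(j : ℕ)], fun j => h2 _ (List.getElem_mem _), ?_⟩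
    rw [List.ofFn_getElem, h3]

lemma repl_mem {i : ℕ} (hi : 1 ≤ i) (w : ℕ → α) :
    (i : ℝ≥0∞) ∈ {x | ∃ v p, IsProd i v w ∧ HasPeriod v p ∧
      x = (v.length : ℝ≥0∞) / (p : ℝ≥0∞)} := by
  refine ⟨List.replicate i (w 0), 1, ?_, ?_, ?_⟩
  · refine ⟨fun _ => [w 0], fun j => ⟨0, ?_⟩, ?_⟩
    · simp [FactorAt, List.range_succ]
    · rw [List.ofFn_const, flatten_replicate_singleton]
  · refine ⟨le_refl 1, by simpa using hi, fun n h => ?_⟩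
    rw [List.length_replicate] at h
    simp only [List.getElem?_replicate]
    rw [if_pos (by omega), if_pos (by omega)]
  · simp

lemma nat_le_pexp {i : ℕ} (hi : 1 ≤ i) (w : ℕ → α) : (i : ℝ≥0∞) ≤ pexp i w :=
  le_sSup (repl_mem hi w)

lemma pexp_add_one_le {i : ℕ} (hi : 1 ≤ i) (w : ℕ → α) :
    pexp i w + 1 ≤ pexp (i + 1) w := by
  simp only [pexp]
  rw [ENNReal.sSup_add ⟨_, repl_mem hi w⟩]
  refine iSup₂_le fun b hb => ?_
  obtain ⟨v, p, hprod, hper, rfl⟩ := hb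
  obtain ⟨L, hL, hfac, rfl⟩ := isProd_list.mp hprod
  have hp1 : 1 ≤ p := hper.1
  have hpE0 : (p : ℝ≥0∞) ≠ 0 := by
    simp only [ne_eq, Nat.cast_eq_zero]; omega
  have hpET : (p : ℝ≥0∞) ≠ ⊤ := ENNReal.natCast_ne_top p
  by_cases hcase : ∃ u ∈ L, p ≤ u.length
  · obtain ⟨u, huL, hpu⟩ := hcase
    obtain ⟨L₁, L₂, rfl⟩ := List.append_of_mem huL
    have hvAB : (L₁ ++ u :: L₂).flatten = L₁.flatten ++ (u ++ L₂.flatten) := by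
      rw [List.flatten_append, List.flatten_cons]
    have hpB : p ≤ (u ++ L₂.flatten).length := by
      rw [List.length_append]; omega
    have hper' : HasPeriod (L₁.flatten ++ ((u ++ L₂.flatten).take p ++ (u ++ L₂.flatten))) p :=
      period_insert (hvAB ▸ hper) hpB
    have htake : (u ++ L₂.flatten).take p = u.take p :=
      List.take_append_of_le_length hpu
    have hprod' : IsProd (i + 1)
        (L₁.flatten ++ ((u ++ L₂.flatten).take p ++ (u ++ L₂.flatten))) w := by
      refine isProd_list.mpr ⟨L₁ ++ (u.take p :: u :: L₂), ?_, ?_, ?_⟩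
      · simp only [List.length_append, List.length_cons] at hL ⊢; omega
      · intro x hx
        simp only [List.mem_append, List.mem_cons] at hx
        rcases hx with hx | hx | hx | hx
        · exact hfac x (by simp [hx])
        · subst hx
          exact (hfac u (by simp)).take p
        · subst hx; exact hfac x (by simp)
        · exact hfac x (by simp [hx])
      · rw [List.flatten_append, List.flatten_cons, List.flatten_cons, htake]
    have hlen' : (((L₁.flatten ++ ((u ++ L₂.flatten).take p ++ (u ++ L₂.flatten))).length : ℝ≥0∞)) / p
        = ((L₁ ++ u :: L₂).flatten.length : ℝ≥0∞) / p + 1 := by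
      have hl : (L₁.flatten ++ ((u ++ L₂.flatten).take p ++ (u ++ L₂.flatten))).length
          = (L₁ ++ u :: L₂).flatten.length + p := by
        rw [hvAB]
        simp only [List.length_append, List.length_take]
        omega
      rw [hl]
      push_cast
      rw [ENNReal.add_div, ENNReal.div_self hpE0 hpET]
    rw [← hlen']
    exact le_sSup ⟨_, p, hprod', hper', rfl⟩
  · push_neg at hcase
    have hlen : (L.flatten.length : ℕ) ≤ i * p := by
      rw [List.length_flatten]
      calc (L.map List.length).sum ≤ (L.map List.length).length • p :=
            List.sum_le_card_nsmul _ p (by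
              intro x hx
              obtain ⟨u, hu, rfl⟩ := List.mem_map.mp hx
              exact le_of_lt (hcase u hu))
        _ = i * p := by simp [hL]
    have h1 : (L.flatten.length : ℝ≥0∞) / p ≤ (i : ℝ≥0∞) := by
      calc (L.flatten.length : ℝ≥0∞) / p ≤ ((i * p : ℕ) : ℝ≥0∞) / p :=
            ENNReal.div_le_div_right (by exact_mod_cast hlen) _
        _ = (i : ℝ≥0∞) := by
            push_cast
            rw [mul_div_assoc, ENNReal.div_self hpE0 hpET, mul_one]
    calc (L.flatten.length : ℝ≥0∞) / p + 1 ≤ (i : ℝ≥0∞) + 1 := add_le_add_left h1 1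
      _ = (((i + 1 : ℕ)) : ℝ≥0∞) := by push_cast; ring
      _ ≤ pexp (i + 1) w := nat_le_pexp (by omega) w

end Aux


theorem stmt6 (k i : ℕ) (hk : 2 ≤ k) (hi : 1 ≤ i) :
    RT i k + 1 ≤ RT (i + 1) k := by
  simp only [RT]
  refine le_iInf fun w => ?_
  calc (⨅ w : ℕ → Fin k, pexp i w) + 1 ≤ pexp i w + 1 :=
        add_le_add_left (iInf_le _ w) 1
    _ ≤ pexp (i + 1) w := pexp_add_one_le hi w
end

section
/- Let w be an infinite word and suppose pexp_2(w) ≤ β for some β ≥ 3 (every product of two factors of w has exponent at most β). Then for every even i = 2m, pexp_i(w) ≤ m·β. In particular no product of i factors of w is a repetition of exponent greater than m·β. -/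
open scoped ENNReal

lemma block2 {α : Type*} (w : ℕ → α) (β : ℝ≥0∞) (hβ : 1 ≤ β)
    (h2 : pexp 2 w ≤ β) (p : ℕ) (hp : 1 ≤ p) (b : List α)
    (hb : IsProd 2 b w)
    (hper : ∀ n, n + p < b.length → b[n]? = b[n + p]?) :
    (b.length : ℝ≥0∞) / (p : ℝ≥0∞) ≤ β := by
  by_cases hlen : p ≤ b.length
  · refine le_trans (le_trans (le_sSup ?_) h2) le_rfl
    exact ⟨b, p, hb, ⟨hp, hlen, hper⟩, rfl⟩
  · refine le_trans ?_ hβ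
    refine ENNReal.div_le_of_le_mul ?_
    rw [one_mul]
    exact_mod_cast le_of_lt (lt_of_not_ge hlen)

lemma key {α : Type*} (w : ℕ → α) (β : ℝ≥0∞) (hβ : 1 ≤ β)
    (h2 : pexp 2 w ≤ β) (p : ℕ) (hp : 1 ≤ p) :
    ∀ m : ℕ, ∀ v : List α, IsProd (2*m) v w →
      (∀ n, n + p < v.length → v[n]? = v[n + p]?) →
      (v.length : ℝ≥0∞) / (p : ℝ≥0∞) ≤ m * β := by
  intro m
  induction m with
  | zero =>
    rintro v ⟨us, _, hv⟩ _
    simp [hv]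
  | succ m ih =>
    rintro v ⟨us, hfac, hv⟩ hper
    set b : List α := us ⟨0, by omega⟩ ++ us ⟨1, by omega⟩ with hbdef
    set us' : Fin (2*m) → List α := fun j => us ⟨j + 2, by omega⟩ with hus'
    set r : List α := (List.ofFn us').flatten with hrdef
    have hsplit : v = b ++ r := by
      rw [hv, hbdef, hrdef]
      rw [List.ofFn_succ, List.ofFn_succ, List.flatten_cons, List.flatten_cons,
        List.append_assoc]
      have e0 : us 0 = us ⟨0, by omega⟩ := by congr 1
      have e1 : us (Fin.succ 0) = us ⟨1, by omega⟩ := by congr 1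
      have e2 : (List.ofFn fun i : Fin (2*m) => us i.succ.succ) = List.ofFn us' := by
        congr 1
      rw [e0, e1]
      exact congrArg _ (congrArg _ (congrArg List.flatten e2))
    have hlen : v.length = b.length + r.length := by rw [hsplit]; simp
    have hbprod : IsProd 2 b w := by
      refine ⟨![us ⟨0, by omega⟩, us ⟨1, by omega⟩], ?_, by simp [hbdef]⟩
      intro j; fin_cases j <;> simp <;> apply hfac
    have hrprod : IsProd (2*m) r w := ⟨us', fun j => hfac _, hrdef⟩
    have hbper : ∀ n, n + p < b.length → b[n]? = b[n+p]? := by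
      intro n hn
      have h1 : b[n]? = v[n]? := by
        rw [hsplit]; exact (List.getElem?_append_left (by omega)).symm
      have hh2 : b[n+p]? = v[n+p]? := by
        rw [hsplit]; exact (List.getElem?_append_left hn).symm
      rw [h1, hh2]; exact hper n (by omega)
    have hrper : ∀ n, n + p < r.length → r[n]? = r[n+p]? := by
      intro n hn
      have h1 : v[b.length + n]? = r[n]? := by
        rw [hsplit, List.getElem?_append_right (by omega)]
        congr 1; omega
      have hh2 : v[b.length + (n+p)]? = r[n+p]? := by
        rw [hsplit, List.getElem?_append_right (by omega)]
        congr 1; omega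
      rw [← h1, ← hh2, show b.length + (n+p) = (b.length + n) + p by omega]
      exact hper _ (by omega)
    calc (v.length : ℝ≥0∞) / (p : ℝ≥0∞)
        = (b.length : ℝ≥0∞) / p + (r.length : ℝ≥0∞) / p := by
          rw [hlen]; push_cast; rw [ENNReal.add_div]
      _ ≤ β + m * β :=
          add_le_add (block2 w β hβ h2 p hp b hbprod hbper) (ih r hrprod hrper)
      _ = (↑(m+1) : ℝ≥0∞) * β := by push_cast; ring


theorem stmt9 {α : Type*} (w : ℕ → α) (β : ℝ≥0∞) (hβ : 3 ≤ β)
    (h2 : pexp 2 w ≤ β) (m : ℕ) (hm : 1 ≤ m) :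
    pexp (2 * m) w ≤ m * β ∧
    ∀ v : List α, ∀ p : ℕ, IsProd (2 * m) v w → HasPeriod v p →
      (v.length : ℝ≥0∞) / (p : ℝ≥0∞) ≤ m * β := by
  have hβ1 : (1 : ℝ≥0∞) ≤ β := le_trans (by norm_num) hβ
  have main : ∀ v : List α, ∀ p : ℕ, IsProd (2 * m) v w → HasPeriod v p →
      (v.length : ℝ≥0∞) / (p : ℝ≥0∞) ≤ m * β := by
    rintro v p hprod ⟨hp1, -, hper⟩
    exact key w β hβ1 h2 p hp1 m v hprod hper
  refine ⟨sSup_le ?_, main⟩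
  rintro x ⟨v, p, hprod, hper, rfl⟩
  exact main v p hprod hper
end

section
/- If w is a recurrent infinite word and u, v are factors of w, then the concatenation vu is a product of two factors of w, and moreover for any factor pxs of w (with x possibly empty), the 'circular' word sp is a product of two factors of w. Consequently, cexp(w) ≤ pexp_2(w) for every recurrent infinite word w. -/
open scoped ENNReal

lemma factorAt_append {α : Type*} {a b : List α} {w : ℕ → α} {m : ℕ} (h : FactorAt (a++b) w m) :
    FactorAt a w m ∧ FactorAt b w (m + a.length) := by
  constructor
  · apply List.ext_getElem (by simp)
    intro i h1 h2
    simp only [List.getElem_map, List.getElem_range]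
    have : (a++b)[i]'(by simp; omega) = w (m+i) := by
      rw [List.getElem_of_eq h]; simp
    simpa [List.getElem_append, h1] using this
  · apply List.ext_getElem (by simp)
    intro i h1 h2
    simp only [List.getElem_map, List.getElem_range]
    have : (a++b)[a.length + i]'(by simp; omega) = w (m+(a.length+i)) := by
      rw [List.getElem_of_eq h]; simp
    rw [List.getElem_append_right (by omega)] at this
    simpa [Nat.add_assoc] using this

lemma prod2_of_factors {α : Type*} {u v : List α} {w : ℕ → α}
    (hu : IsFactorI u w) (hv : IsFactorI v w) : IsProd 2 (v ++ u) w := by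
  refine ⟨![v, u], ?_, ?_⟩
  · intro j; fin_cases j <;> simpa
  · simp

theorem stmt12 {α : Type*} (w : ℕ → α)
    (hrec : ∀ u : List α, IsFactorI u w → ∀ N : ℕ, ∃ m, N ≤ m ∧ FactorAt u w m) :
    (∀ u v : List α, IsFactorI u w → IsFactorI v w → IsProd 2 (v ++ u) w) ∧
    (∀ p x s : List α, IsFactorI (p ++ x ++ s) w → IsProd 2 (s ++ p) w) ∧
    cexp w ≤ pexp 2 w := by
  have key : ∀ p x s : List α, IsFactorI (p ++ x ++ s) w → IsProd 2 (s ++ p) w := by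
    intro p x s ⟨m, hm⟩
    have h1 := (factorAt_append (by simpa [List.append_assoc] using hm)).1
    have h2 := (factorAt_append hm).2
    exact prod2_of_factors ⟨m, h1⟩ ⟨_, h2⟩
  refine ⟨fun u v hu hv => prod2_of_factors hu hv, key, ?_⟩
  apply sSup_le_sSup
  rintro x ⟨p, xx, s, q, hf, hper, hx⟩
  exact ⟨s ++ p, q, key p xx s hf, hper, hx⟩
end
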